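/- For every positive integer n and every real number t with |t| < 1, one has the convergent Maclaurin series expansion (arctan t)^n = n! · Σ_{k=0}^∞ (−1)^k S_{n−1}(k) · t^{2k+n}/(2k+n), where the nested harmonic-type sums S_m(j) are defined by S_0(j) = 1 and S_m(j) = Σ_{i=0}^{j} S_{m−1}(i)/(2i+m) for m ≥ 1. -/

import Mathlib

set_option maxHeartbeats 1000000


/-- The nested harmonic-type sums: `S 0 j = 1` and
`S (m+1) j = ∑_{i=0}^{j} S m i / (2i + (m+1))`. -/
noncomputable def nestedS : ℕ → ℕ → ℝ
  | 0, _ => 1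
  | m + 1, j => ∑ i ∈ Finset.range (j + 1), nestedS m i / (2 * (i : ℝ) + ((m : ℝ) + 1))

lemma hasSum_congr' {f g : ℕ → ℝ} {a : ℝ} (h : HasSum f a) (he : ∀ k, g k = f k) :
    HasSum g a := by
  have hfg : g = f := funext he
  rwa [hfg]

lemma nestedS_nonneg : ∀ m k, 0 ≤ nestedS m k
  | 0, _ => zero_le_one
  | m + 1, j => Finset.sum_nonneg fun i _ =>
      div_nonneg (nestedS_nonneg m i) (by positivity)

lemma nestedS_le : ∀ m k, nestedS m k ≤ ((k : ℝ) + 1) ^ m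
  | 0, k => by simp [nestedS]
  | m + 1, j => by
    rw [nestedS]
    calc ∑ i ∈ Finset.range (j + 1), nestedS m i / (2 * (i : ℝ) + ((m : ℝ) + 1))
        ≤ ∑ _i ∈ Finset.range (j + 1), ((j : ℝ) + 1) ^ m := by
          apply Finset.sum_le_sum
          intro i hi
          have hi' : (i : ℝ) ≤ (j : ℝ) := by
            exact_mod_cast Nat.lt_succ_iff.1 (Finset.mem_range.1 hi)
          have h1 : (1 : ℝ) ≤ 2 * (i : ℝ) + ((m : ℝ) + 1) := by
            have : (0 : ℝ) ≤ (i : ℝ) := Nat.cast_nonneg i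
            have : (0 : ℝ) ≤ (m : ℝ) := Nat.cast_nonneg m
            linarith
          calc nestedS m i / (2 * (i : ℝ) + ((m : ℝ) + 1)) ≤ nestedS m i :=
                div_le_self (nestedS_nonneg m i) h1
            _ ≤ ((i : ℝ) + 1) ^ m := nestedS_le m i
            _ ≤ ((j : ℝ) + 1) ^ m := by
                apply pow_le_pow_left₀ (by positivity)
                linarith
      _ = ((j : ℝ) + 1) ^ (m + 1) := by
          rw [Finset.sum_const, Finset.card_range]
          push_cast
          ring

lemma nestedS_zero (m : ℕ) : nestedS (m + 1) 0 = nestedS m 0 / ((m : ℝ) + 1) := by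
  simp [nestedS]

lemma nestedS_succ (m j : ℕ) :
    nestedS (m + 1) (j + 1) =
      nestedS (m + 1) j + nestedS m (j + 1) / (2 * ((j : ℝ) + 1) + ((m : ℝ) + 1)) := by
  show ∑ i ∈ Finset.range (j + 1 + 1), nestedS m i / (2 * (i : ℝ) + ((m : ℝ) + 1)) = _
  rw [Finset.sum_range_succ,
    show nestedS (m + 1) j
      = ∑ i ∈ Finset.range (j + 1), nestedS m i / (2 * (i : ℝ) + ((m : ℝ) + 1)) from rfl]
  congr 1
  push_cast
  ring

lemma summable_aux (m : ℕ) {r : ℝ} (h0 : 0 < r) (h1 : r < 1) :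
    Summable (fun k : ℕ => ((k : ℝ) + 1) ^ m * r ^ (2 * k)) := by
  have h2 : ‖r ^ 2‖ < 1 := by
    rw [Real.norm_eq_abs, abs_of_nonneg (by positivity)]
    nlinarith
  have h3 := summable_pow_mul_geometric_of_norm_lt_one m h2
  have h4 : Summable (fun k : ℕ => ((k + 1 : ℕ) : ℝ) ^ m * (r ^ 2) ^ (k + 1)) :=
    (summable_nat_add_iff 1).2 h3
  have h5 := h4.mul_left ((r ^ 2)⁻¹)
  apply h5.congr
  intro k
  have hr2 : (r : ℝ) ^ 2 ≠ 0 := by positivity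
  field_simp
  rw [pow_succ, ← pow_mul]
  push_cast
  ring

lemma norm_term_le (n k : ℕ) {y r : ℝ} (hy : |y| ≤ r) (hr1 : r ≤ 1) :
    ‖(-1 : ℝ) ^ k * nestedS n k * y ^ (2 * k + n)‖ ≤ ((k : ℝ) + 1) ^ n * r ^ (2 * k) := by
  have hr0 : 0 ≤ r := le_trans (abs_nonneg y) hy
  have h1 : ‖(-1 : ℝ) ^ k * nestedS n k * y ^ (2 * k + n)‖
      = nestedS n k * |y| ^ (2 * k + n) := by
    rw [norm_mul, norm_mul, norm_pow, norm_pow, Real.norm_eq_abs, Real.norm_eq_abs,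
      Real.norm_eq_abs, abs_neg, abs_one, one_pow, one_mul,
      abs_of_nonneg (nestedS_nonneg n k)]
  rw [h1]
  have h2 : |y| ^ (2 * k + n) ≤ r ^ (2 * k) := by
    calc |y| ^ (2 * k + n) ≤ r ^ (2 * k + n) := pow_le_pow_left₀ (abs_nonneg y) hy _
      _ = r ^ (2 * k) * r ^ n := pow_add r _ _
      _ ≤ r ^ (2 * k) * 1 := by
          apply mul_le_mul_of_nonneg_left (pow_le_one₀ hr0 hr1) (by positivity)
      _ = r ^ (2 * k) := mul_one _
  exact mul_le_mul (nestedS_le n k) h2 (by positivity) (by positivity)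

lemma summable_d (n : ℕ) {t : ℝ} (ht : |t| < 1) :
    Summable (fun k : ℕ => (-1 : ℝ) ^ k * nestedS n k * t ^ (2 * k + n)) := by
  set r : ℝ := (|t| + 1) / 2 with hr
  have h0 : 0 < r := by positivity
  have h1 : r < 1 := by rw [hr]; linarith
  have htr : |t| ≤ r := by rw [hr]; linarith
  exact Summable.of_norm_bounded (summable_aux n h0 h1)
    (fun k => norm_term_le n k htr h1.le)

/-- Term-by-term differentiation of the series for `arctan^(n+1)/(n+1)!`. -/
lemma hasDerivAt_F (n : ℕ) {x : ℝ} (hx : |x| < 1) :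
    HasDerivAt
      (fun t : ℝ => ∑' k : ℕ,
        (-1 : ℝ) ^ k * nestedS n k * t ^ (2 * k + n + 1) / (2 * (k : ℝ) + (n : ℝ) + 1))
      (∑' k : ℕ, (-1 : ℝ) ^ k * nestedS n k * x ^ (2 * k + n)) x := by
  set r : ℝ := (|x| + 1) / 2 with hr
  have h0 : 0 < r := by positivity
  have h1 : r < 1 := by rw [hr]; linarith
  have hxr : |x| < r := by rw [hr]; linarith
  apply hasDerivAt_tsum_of_isPreconnected (summable_aux n h0 h1) isOpen_Ioo
    (isPreconnected_Ioo (a := -r) (b := r))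
    (g' := fun k y => (-1 : ℝ) ^ k * nestedS n k * y ^ (2 * k + n))
    (y₀ := 0)
  · intro k y _
    have hD : (2 * (k : ℝ) + (n : ℝ) + 1) ≠ 0 := by positivity
    have h2 := ((hasDerivAt_pow (2 * k + n + 1) y).const_mul
      ((-1 : ℝ) ^ k * nestedS n k)).div_const (2 * (k : ℝ) + (n : ℝ) + 1)
    convert h2 using 1
    any_goals rfl
    have hc : ((2 * k + n + 1 : ℕ) : ℝ) = 2 * (k : ℝ) + (n : ℝ) + 1 := by push_cast; ring
    rw [hc, Nat.add_sub_cancel]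
    field_simp
  · intro k y hy
    have hy' : |y| ≤ r := by
      rw [abs_le]
      exact ⟨(Set.mem_Ioo.1 hy).1.le, (Set.mem_Ioo.1 hy).2.le⟩
    exact norm_term_le n k hy' h1.le
  · exact Set.mem_Ioo.2 ⟨by linarith, h0⟩
  · apply summable_zero.congr
    intro k
    rw [zero_pow (by omega : 2 * k + n + 1 ≠ 0)]
    simp
  · exact Set.mem_Ioo.2 (abs_lt.1 hxr)

/-- Geometric series: `(1+x²) · A 0 x = 1`. -/
lemma tsum_d_zero {x : ℝ} (hx : |x| < 1) :
    (∑' k : ℕ, (-1 : ℝ) ^ k * nestedS 0 k * x ^ (2 * k + 0)) = (1 + x ^ 2)⁻¹ := by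
  have h1 : ‖-x ^ 2‖ < 1 := by
    rw [norm_neg, Real.norm_eq_abs, abs_of_nonneg (by positivity)]
    nlinarith [abs_nonneg x, sq_abs x]
  have h2 := hasSum_geometric_of_norm_lt_one h1
  have h3 : HasSum (fun k : ℕ => (-1 : ℝ) ^ k * nestedS 0 k * x ^ (2 * k + 0))
      (1 - (-x ^ 2))⁻¹ := by
    apply hasSum_congr' h2
    intro k
    show (-1 : ℝ) ^ k * nestedS 0 k * x ^ (2 * k + 0) = (-x ^ 2) ^ k
    have hnp : (-x ^ 2) ^ k = (-1 : ℝ) ^ k * x ^ (2 * k) := by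
      rw [neg_pow, ← pow_mul]
    rw [show nestedS 0 k = 1 from rfl, mul_one, hnp]
    norm_num
  rw [h3.tsum_eq]
  ring_nf

/-- The telescoping identity:
the series for `arctan^(m+1)/(m+1)!` has sum `(1+x²) · A (m+1) x`. -/
lemma hasSum_tel (m : ℕ) {x : ℝ} (hx : |x| < 1) :
    HasSum
      (fun k : ℕ =>
        (-1 : ℝ) ^ k * nestedS m k * x ^ (2 * k + m + 1) / (2 * (k : ℝ) + (m : ℝ) + 1))
      ((1 + x ^ 2) *
        ∑' k : ℕ, (-1 : ℝ) ^ k * nestedS (m + 1) k * x ^ (2 * k + (m + 1))) := by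
  set a : ℕ → ℝ := fun k => (-1 : ℝ) ^ k * nestedS (m + 1) k * x ^ (2 * k + (m + 1)) with ha
  set A : ℝ := ∑' k, a k with hA
  have hsA : HasSum a A := (summable_d (m + 1) hx).hasSum
  set b : ℕ → ℝ := fun k =>
    if k = 0 then 0 else (-1 : ℝ) ^ k * nestedS (m + 1) (k - 1) * x ^ (2 * k + (m + 1))
    with hb
  have hb1 : ∀ k : ℕ, b (k + 1) = -(x ^ 2 * a k) := by
    intro k
    simp only [hb, ha, if_neg (Nat.succ_ne_zero k), Nat.add_sub_cancel]
    have he : 2 * (k + 1) + (m + 1) = (2 * k + (m + 1)) + 2 := by ring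
    rw [he, pow_add, pow_succ]
    ring
  have hsb' : HasSum (fun k => b (k + 1)) (-(x ^ 2 * A)) := by
    have := (hsA.mul_left (x ^ 2)).neg
    apply hasSum_congr' this
    intro k
    rw [hb1 k]
  have hsb : HasSum b (-(x ^ 2 * A)) := by
    have := (hasSum_nat_add_iff 1).1 hsb'
    simpa [hb] using this
  have hsub := hsA.sub hsb
  have hval : A - -(x ^ 2 * A) = (1 + x ^ 2) * A := by ring
  rw [hval] at hsub
  apply hasSum_congr' hsub
  intro k
  match k with
  | 0 =>
    simp only [ha, hb, if_pos rfl, sub_zero, pow_zero, one_mul]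
    rw [nestedS_zero]
    push_cast
    ring
  | j + 1 =>
    simp only [ha, hb, if_neg (Nat.succ_ne_zero j), Nat.add_sub_cancel]
    rw [nestedS_succ]
    have hD : 2 * ((j : ℝ) + 1) + ((m : ℝ) + 1) ≠ 0 := by positivity
    push_cast
    field_simp
    ring

lemma F_zero (m : ℕ) :
    (∑' k : ℕ,
      (-1 : ℝ) ^ k * nestedS m k * (0 : ℝ) ^ (2 * k + m + 1) / (2 * (k : ℝ) + (m : ℝ) + 1))
      = 0 := by
  have : ∀ k : ℕ,
      (-1 : ℝ) ^ k * nestedS m k * (0 : ℝ) ^ (2 * k + m + 1) / (2 * (k : ℝ) + (m : ℝ) + 1)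
        = 0 := by
    intro k
    rw [zero_pow (by omega : 2 * k + m + 1 ≠ 0)]
    simp
  simp only [this]
  exact tsum_zero

lemma const_of_deriv_zero {f : ℝ → ℝ}
    (hf : ∀ y ∈ Set.Ioo (-1 : ℝ) 1, HasDerivAt f 0 y)
    {x : ℝ} (hx : x ∈ Set.Ioo (-1 : ℝ) 1) : f x = f 0 := by
  apply (convex_Ioo (-1 : ℝ) 1).is_const_of_fderivWithin_eq_zero
    (fun y hy => ((hf y hy).differentiableAt).differentiableWithinAt) ?_ hx
    (by norm_num)
  intro y hy
  rw [fderivWithin_of_isOpen isOpen_Ioo hy]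
  have h1 : deriv f y = 0 := (hf y hy).deriv
  have h2 : DifferentiableAt ℝ f y := (hf y hy).differentiableAt
  ext z
  simp [h2.hasDerivAt.hasFDerivAt.fderiv, h1]

lemma main_ind : ∀ (m : ℕ) {x : ℝ}, |x| < 1 →
    Real.arctan x ^ (m + 1) = ((m + 1).factorial : ℝ) *
      ∑' k : ℕ,
        (-1 : ℝ) ^ k * nestedS m k * x ^ (2 * k + m + 1) / (2 * (k : ℝ) + (m : ℝ) + 1) := by
  intro m
  induction m with
  | zero =>
    intro x hx
    have key : ∀ y ∈ Set.Ioo (-1 : ℝ) 1,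
        HasDerivAt (fun t : ℝ => Real.arctan t -
          ∑' k : ℕ, (-1 : ℝ) ^ k * nestedS 0 k * t ^ (2 * k + 0 + 1)
            / (2 * (k : ℝ) + ((0 : ℕ) : ℝ) + 1)) 0 y := by
      intro y hy
      have hy' : |y| < 1 := abs_lt.2 ⟨(Set.mem_Ioo.1 hy).1, (Set.mem_Ioo.1 hy).2⟩
      have d1 := Real.hasDerivAt_arctan y
      have d2 := hasDerivAt_F 0 hy'
      have := d1.sub d2
      convert this using 1
      any_goals rfl
      rw [tsum_d_zero hy']
      have h2 : (1 : ℝ) + y ^ 2 ≠ 0 := by positivity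
      field_simp
      ring
    have h0 := const_of_deriv_zero key (Set.mem_Ioo.2 (abs_lt.1 hx))
    rw [Real.arctan_zero, F_zero 0] at h0
    simp only [sub_zero] at h0
    have : Real.arctan x = ∑' k : ℕ, (-1 : ℝ) ^ k * nestedS 0 k * x ^ (2 * k + 0 + 1)
        / (2 * (k : ℝ) + ((0 : ℕ) : ℝ) + 1) := by linarith [sub_eq_zero.1 h0]
    rw [pow_one, this]
    simp
  | succ m ih =>
    intro x hx
    have key : ∀ y ∈ Set.Ioo (-1 : ℝ) 1,
        HasDerivAt (fun t : ℝ => Real.arctan t ^ (m + 2) -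
          ((m + 2).factorial : ℝ) *
            ∑' k : ℕ, (-1 : ℝ) ^ k * nestedS (m + 1) k * t ^ (2 * k + (m + 1) + 1)
              / (2 * (k : ℝ) + (((m + 1 : ℕ)) : ℝ) + 1)) 0 y := by
      intro y hy
      have hy' : |y| < 1 := abs_lt.2 ⟨(Set.mem_Ioo.1 hy).1, (Set.mem_Ioo.1 hy).2⟩
      have d1 := (Real.hasDerivAt_arctan y).pow (m + 2)
      have d2 := (hasDerivAt_F (m + 1) hy').const_mul (((m + 2).factorial : ℝ))
      have := d1.sub d2
      convert this using 1
      any_goals rfl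
      have htel := (hasSum_tel m hy').tsum_eq
      have hih := ih hy'
      have h2 : (1 : ℝ) + y ^ 2 ≠ 0 := by positivity
      have hfac : ((m + 2).factorial : ℝ) = ((m : ℝ) + 2) * ((m + 1).factorial : ℝ) := by
        rw [show m + 2 = (m + 1) + 1 from rfl, Nat.factorial_succ]
        push_cast
        ring
      simp only [Nat.succ_sub_one]
      rw [hfac, hih, htel]
      push_cast
      field_simp
      ring
    have h0 := const_of_deriv_zero key (Set.mem_Ioo.2 (abs_lt.1 hx))
    rw [Real.arctan_zero, F_zero (m + 1)] at h0
    rw [zero_pow (by omega : m + 2 ≠ 0)] at h0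
    simp only [mul_zero, sub_zero] at h0
    linarith [sub_eq_zero.1 h0]

/-- Maclaurin series for `(arctan t)^n`:
`(arctan t)^n = n! ∑_{k=0}^∞ (−1)^k S_{n−1}(k) t^{2k+n}/(2k+n)`. -/
theorem arctan_pow_maclaurin (n : ℕ) (hn : 1 ≤ n) (t : ℝ) (ht : |t| < 1) :
    ∃ S : ℝ,
      HasSum (fun k : ℕ =>
        (-1 : ℝ) ^ k * nestedS (n - 1) k * t ^ (2 * k + n) / ((2 * k + n : ℕ) : ℝ)) S ∧
      Real.arctan t ^ n = (n.factorial : ℝ) * S := by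
  obtain ⟨m, rfl⟩ : ∃ m, n = m + 1 := ⟨n - 1, (Nat.succ_pred_eq_of_pos hn).symm⟩
  have htel := hasSum_tel m ht
  refine ⟨(1 + t ^ 2) * ∑' k : ℕ, (-1 : ℝ) ^ k * nestedS (m + 1) k * t ^ (2 * k + (m + 1)),
    ?_, ?_⟩
  · apply hasSum_congr' htel
    intro k
    have hc : ((2 * k + (m + 1) : ℕ) : ℝ) = 2 * (k : ℝ) + (m : ℝ) + 1 := by push_cast; ring
    rw [Nat.add_sub_cancel, hc, ← Nat.add_assoc]
  · rw [main_ind m ht, htel.tsum_eq]
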